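/- Let ℓ, c₁, c₂, c₃, c₇ > 0 be real numbers. In the exterior algebra Λ•(ℝ⁷) with standard basis e₁,…,e₇, define ω₁ = ℓ e₄∧e₅ + √(c₇ℓ) e₆∧e₇, ω₂ = ℓ e₄∧e₆ − √(c₇ℓ) e₅∧e₇, ω₃ = −√(c₇ℓ) e₄∧e₇ − ℓ e₅∧e₆, and set φ¹ = √(c₁c₂c₃) e₁∧e₂∧e₃ + √c₁ e₁∧ω₁ + √c₂ e₂∧ω₂ + √c₃ e₃∧ω₃. Then there exists a basis u₁,…,u₇ of ℝ⁷ such that φ¹ = u₁∧u₂∧u₃ − u₁∧u₄∧u₅ − u₁∧u₆∧u₇ − u₂∧u₄∧u₆ + u₂∧u₅∧u₇ − u₃∧u₄∧u₇ − u₃∧u₅∧u₆; that is, φ¹ is a 3-vector of G₂-type. -/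

import Mathlib

set_option maxHeartbeats 1000000


/-- The generator of `Λ•(ℝ⁷)` corresponding to the `i`-th standard basis vector. -/
noncomputable def e7 (i : Fin 7) : ExteriorAlgebra ℝ (Fin 7 → ℝ) :=
  ExteriorAlgebra.ι ℝ (Pi.single i 1)

/-- The standard associative 3-form `φ₀` evaluated on a family `u₁, …, u₇` (indexed by
`0, …, 6`):
`u₁∧u₂∧u₃ − u₁∧u₄∧u₅ − u₁∧u₆∧u₇ − u₂∧u₄∧u₆ + u₂∧u₅∧u₇ − u₃∧u₄∧u₇ − u₃∧u₅∧u₆`. -/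
noncomputable def g2Form (u : Fin 7 → (Fin 7 → ℝ)) : ExteriorAlgebra ℝ (Fin 7 → ℝ) :=
  let w : Fin 7 → ExteriorAlgebra ℝ (Fin 7 → ℝ) := fun i => ExteriorAlgebra.ι ℝ (u i)
  w 0 * w 1 * w 2 - w 0 * w 3 * w 4 - w 0 * w 5 * w 6 - w 1 * w 3 * w 5
    + w 1 * w 4 * w 6 - w 2 * w 3 * w 6 - w 2 * w 4 * w 5

/-- with standard basis `e₁, …, e₇` (indexed here by `0, …, 6`), the 3-vector
`φ¹ = √(c₁c₂c₃) e₁∧e₂∧e₃ + √c₁ e₁∧ω₁ + √c₂ e₂∧ω₂ + √c₃ e₃∧ω₃`, with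
`ω₁ = ℓ e₄∧e₅ + √(c₇ℓ) e₆∧e₇`, `ω₂ = ℓ e₄∧e₆ − √(c₇ℓ) e₅∧e₇`,
`ω₃ = −√(c₇ℓ) e₄∧e₇ − ℓ e₅∧e₆`, is of G₂-type: it equals the standard associative 3-form in
some basis `u₁, …, u₇` of `ℝ⁷`. -/
theorem statement8 (ℓ c₁ c₂ c₃ c₇ : ℝ) (hℓ : 0 < ℓ) (hc₁ : 0 < c₁) (hc₂ : 0 < c₂)
    (hc₃ : 0 < c₃) (hc₇ : 0 < c₇) :
    ∀ ω₁ ω₂ ω₃ φ : ExteriorAlgebra ℝ (Fin 7 → ℝ),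
      ω₁ = ℓ • (e7 3 * e7 4) + Real.sqrt (c₇ * ℓ) • (e7 5 * e7 6) →
      ω₂ = ℓ • (e7 3 * e7 5) - Real.sqrt (c₇ * ℓ) • (e7 4 * e7 6) →
      ω₃ = -(Real.sqrt (c₇ * ℓ) • (e7 3 * e7 6)) - ℓ • (e7 4 * e7 5) →
      φ = Real.sqrt (c₁ * c₂ * c₃) • (e7 0 * e7 1 * e7 2)
          + Real.sqrt c₁ • (e7 0 * ω₁) + Real.sqrt c₂ • (e7 1 * ω₂)
          + Real.sqrt c₃ • (e7 2 * ω₃) →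
      ∃ u : Module.Basis (Fin 7) ℝ (Fin 7 → ℝ), φ = g2Form (fun i => u i) := by
  intro ω₁ ω₂ ω₃ φ h1 h2 h3 h4
  have sℓ : Real.sqrt ℓ ≠ 0 := Real.sqrt_ne_zero'.2 hℓ
  have s1 : Real.sqrt c₁ ≠ 0 := Real.sqrt_ne_zero'.2 hc₁
  have s2 : Real.sqrt c₂ ≠ 0 := Real.sqrt_ne_zero'.2 hc₂
  have s3 : Real.sqrt c₃ ≠ 0 := Real.sqrt_ne_zero'.2 hc₃
  have s7 : Real.sqrt c₇ ≠ 0 := Real.sqrt_ne_zero'.2 hc₇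
  set d : Fin 7 → ℝˣ := ![Units.mk0 _ s1, Units.mk0 _ s2, Units.mk0 _ s3,
    Units.mk0 _ (neg_ne_zero.2 sℓ), Units.mk0 _ sℓ, Units.mk0 _ sℓ,
    Units.mk0 _ (neg_ne_zero.2 s7)] with hd
  refine ⟨(Pi.basisFun ℝ (Fin 7)).unitsSMul d, ?_⟩
  have hb : ∀ i, ((Pi.basisFun ℝ (Fin 7)).unitsSMul d) i = (d i : ℝ) • (Pi.single i 1 : Fin 7 → ℝ) := by
    intro i
    simp [Module.Basis.unitsSMul_apply, Units.smul_def]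
  have hmul : Real.sqrt ℓ * Real.sqrt ℓ = ℓ := Real.mul_self_sqrt hℓ.le
  have hs : Real.sqrt (c₇ * ℓ) = Real.sqrt c₇ * Real.sqrt ℓ := Real.sqrt_mul hc₇.le ℓ
  have h123 : Real.sqrt (c₁ * c₂ * c₃) = Real.sqrt c₁ * Real.sqrt c₂ * Real.sqrt c₃ := by
    rw [Real.sqrt_mul (by positivity), Real.sqrt_mul hc₁.le]
  subst h1 h2 h3 h4
  simp only [g2Form, e7, hb, map_smul]
  have hd0 : (d 0 : ℝ) = Real.sqrt c₁ := rfl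
  have hd1 : (d 1 : ℝ) = Real.sqrt c₂ := rfl
  have hd2 : (d 2 : ℝ) = Real.sqrt c₃ := rfl
  have hd3 : (d 3 : ℝ) = -Real.sqrt ℓ := rfl
  have hd4 : (d 4 : ℝ) = Real.sqrt ℓ := rfl
  have hd5 : (d 5 : ℝ) = Real.sqrt ℓ := rfl
  have hd6 : (d 6 : ℝ) = -Real.sqrt c₇ := rfl
  simp only [hd0, hd1, hd2, hd3, hd4, hd5, hd6, hs, h123]
  simp only [smul_mul_assoc, mul_smul_comm, smul_smul, mul_add, mul_sub, smul_add, smul_sub,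
    smul_neg, mul_neg, neg_mul, neg_smul, neg_neg, mul_assoc]
  match_scalars <;> nlinarith [hmul, Real.sqrt_nonneg ℓ, Real.sqrt_nonneg c₁, Real.sqrt_nonneg c₂, Real.sqrt_nonneg c₃, Real.sqrt_nonneg c₇]
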